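/- arXiv:1701.06076 — 2 statements merged into one kernel-verified Lean document; each statement's English description precedes it below -/
import Mathlib

section
/- Fix τ with Im τ > 0 and b = 2π/Im τ. Suppose ψ : ℂ → ℂ is continuous, satisfies ψ(-x) = ψ(x), and satisfies the quasi-periodicity relations ψ(y+1) = e^{i k n y₂ / 2} ψ(y) and ψ(y+τ) = e^{i k n (τ₁ y₂ - τ₂ y₁)/2} ψ(y) where y = y₁ + i y₂, τ = τ₁ + i τ₂, k τ₂ = 2π, and n is an odd integer. Then ψ(½(1+τ)) = 0. -/
open Complex Real

theorem psi_vanishes_at_half_one_plus_tau (τ : ℂ) (hτ : 0 < τ.im)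
    (k : ℝ) (hk : k * τ.im = 2 * Real.pi)
    (n : ℤ) (hodd : Odd n)
    (ψ : ℂ → ℂ) (hcont : Continuous ψ)
    (heven : ∀ x, ψ (-x) = ψ x)
    (h1 : ∀ y : ℂ, ψ (y + 1) = Complex.exp (Complex.I * ((k * n * y.im / 2 : ℝ) : ℂ)) * ψ y)
    (h2 : ∀ y : ℂ, ψ (y + τ) =
      Complex.exp (Complex.I * ((k * n * (τ.re * y.im - τ.im * y.re) / 2 : ℝ) : ℂ)) * ψ y) :
    ψ ((1 + τ) / 2) = 0 := by
  obtain ⟨m, hm⟩ := hodd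
  set z : ℂ := -(1 + τ)/2 with hzdef
  have hzre : z.re = -(1 + τ.re)/2 := by simp [hzdef]
  have hzim : z.im = -τ.im/2 := by simp [hzdef]
  have e1 := h1 z
  have e2 := h2 z
  have ha : k * (n : ℝ) * (τ.re * z.im - τ.im * z.re) / 2 = Real.pi * n / 2 := by
    rw [hzre, hzim]; linear_combination ((n : ℝ)/4) * hk
  have hb : k * (n : ℝ) * z.im / 2 = -(Real.pi * n) / 2 := by
    rw [hzim]; linear_combination (-(n : ℝ)/4) * hk
  rw [ha] at e2
  rw [hb] at e1
  have hzτ : z + τ = -(z + 1) := by rw [hzdef]; ring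
  rw [hzτ, heven (z + 1), e1] at e2
  -- e2 : exp (I * ↑(-(π*n)/2)) * ψ z = exp (I * ↑(π*n/2)) * ψ z
  have hpin : Complex.exp (Complex.I * ((Real.pi * n / 2 : ℝ) : ℂ)) =
      -Complex.exp (Complex.I * ((-(Real.pi * n) / 2 : ℝ) : ℂ)) := by
    have h1' : (Complex.I * ((Real.pi * n / 2 : ℝ) : ℂ)) =
        (Complex.I * ((-(Real.pi * n) / 2 : ℝ) : ℂ)) +
          ((m : ℂ) * (2 * (Real.pi : ℂ) * Complex.I) + (Real.pi : ℂ) * Complex.I) := by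
      push_cast [hm]; ring
    rw [h1', Complex.exp_add, Complex.exp_add, Complex.exp_int_mul_two_pi_mul_I,
      Complex.exp_pi_mul_I]
    ring
  rw [hpin] at e2
  have hexp : Complex.exp (Complex.I * ((-(Real.pi * n) / 2 : ℝ) : ℂ)) ≠ 0 :=
    Complex.exp_ne_zero _
  have hψz : ψ z = 0 := by
    have h2' : Complex.exp (Complex.I * ((-(Real.pi * n) / 2 : ℝ) : ℂ)) * (2 * ψ z) = 0 := by
      linear_combination e2
    rcases mul_eq_zero.1 h2' with h | h
    · exact absurd h hexp
    · have := mul_eq_zero.1 h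
      simpa using this
  have : ψ (-z) = ψ z := heven z
  rw [show -z = (1 + τ)/2 by rw [hzdef]; ring] at this
  rw [this, hψz]
end

section
/- Let n be even. If ψ : ℝ² → ℂ satisfies ψ(x+t) = e^{i((n/2) x·Jt + c_t)} ψ(x) for all t ∈ ℒ, where ℒ = √(2π/Im τ)(ℤ + τℤ), J is rotation by π/2, and c_t = πnpq for t = √(2π/Im τ)(p+qτ), and if g ∈ SO(2) maps ℒ to itself, then ψ∘g also satisfies the same quasi-periodicity condition, i.e. ψ(g(x+t)) = e^{i((n/2) x·Jt + c_t)} ψ(gx). -/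
open Complex Real

/-- Scaling factor r = √(2π/Im τ) of the normalized lattice, as a complex number. -/
noncomputable def rr (τ : ℂ) : ℂ := ((Real.sqrt (2 * Real.pi / τ.im) : ℝ) : ℂ)

/-- The normalized lattice ℒ = √(2π/Im τ)(ℤ + τℤ) ⊂ ℂ. -/
noncomputable def latt (τ : ℂ) : Set ℂ := {w | ∃ p q : ℤ, w = rr τ * ((p : ℂ) + q * τ)}

/-- x · Jt where J is rotation by π/2 (i.e. multiplication by i). -/
noncomputable def dotJ (x t : ℂ) : ℝ :=
  x.re * (Complex.I * t).re + x.im * (Complex.I * t).im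

lemma dotJ_rot (g x t : ℂ) (hg : ‖g‖ = 1) :
    dotJ (g * x) (g * t) = dotJ x t := by
  have h : g.re ^ 2 + g.im ^ 2 = 1 := by
    have := Complex.sq_norm g
    rw [hg] at this
    simpa [Complex.normSq_apply, sq] using this.symm
  simp only [dotJ, Complex.mul_re, Complex.mul_im, Complex.I_re, Complex.I_im]
  linear_combination (x.im * t.re - x.re * t.im) * h

lemma exp_phase (n : ℕ) (hn : Even n) (p q : ℤ) (A : ℝ) :
    Complex.exp (Complex.I * ((A + Real.pi * n * p * q : ℝ) : ℂ)) =
      Complex.exp (Complex.I * (A : ℂ)) := by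
  obtain ⟨m, hm⟩ := hn
  have : (Complex.I * ((A + Real.pi * n * p * q : ℝ) : ℂ)) =
      Complex.I * (A : ℂ) + ((m : ℤ) * p * q : ℤ) * (2 * Real.pi * Complex.I) := by
    push_cast [hm]
    ring
  rw [this, Complex.exp_add, Complex.exp_int_mul_two_pi_mul_I, mul_one]

theorem quasiperiodicity_rotation_invariant (n : ℕ) (hn : Even n)
    (τ : ℂ) (hτ : 0 < τ.im)
    (g : ℂ) (hg : ‖g‖ = 1)
    (hgL : (fun w => g * w) '' latt τ = latt τ)
    (ψ : ℂ → ℂ)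
    (hψ : ∀ (p q : ℤ) (x : ℂ),
      ψ (x + rr τ * ((p : ℂ) + q * τ)) =
        Complex.exp (Complex.I *
          ((((n : ℝ) / 2) * dotJ x (rr τ * ((p : ℂ) + q * τ)) + Real.pi * n * p * q : ℝ) : ℂ)) *
          ψ x) :
    ∀ (p q : ℤ) (x : ℂ),
      ψ (g * (x + rr τ * ((p : ℂ) + q * τ))) =
        Complex.exp (Complex.I *
          ((((n : ℝ) / 2) * dotJ x (rr τ * ((p : ℂ) + q * τ)) + Real.pi * n * p * q : ℝ) : ℂ)) *
          ψ (g * x) := by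
  intro p q x
  set t : ℂ := rr τ * ((p : ℂ) + q * τ) with ht
  have htL : t ∈ latt τ := ⟨p, q, rfl⟩
  have hgt : g * t ∈ latt τ := by
    rw [← hgL]; exact ⟨t, htL, rfl⟩
  obtain ⟨p', q', hpq⟩ := hgt
  have key : ψ (g * x + g * t) =
      Complex.exp (Complex.I *
        ((((n : ℝ) / 2) * dotJ (g * x) (g * t) + Real.pi * n * p' * q' : ℝ) : ℂ)) * ψ (g * x) := by
    have := hψ p' q' (g * x)
    rw [← hpq] at this
    exact this
  rw [mul_add, key, dotJ_rot g x t hg, exp_phase n hn p' q', exp_phase n hn p q]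
end
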